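/- Every interval graph admits a conflict-free 2-coloring. That is, if V is a finite set and each v ∈ V is assigned a closed real interval [a(v), b(v)] with a(v) ≤ b(v), then the simple graph on V in which distinct u, v are adjacent if and only if their intervals intersect (i.e., a(u) ≤ b(v) and a(v) ≤ b(u)) admits a conflict-free 2-coloring. -/

import Mathlib

/-- A conflict-free coloring of `G` with `k` colors: a partial coloring
(uncolored vertices get `none`) such that every vertex has, in its closed
neighborhood, a colored vertex whose color occurs exactly once there. -/
def IsCFColoring {V : Type*} (G : SimpleGraph V) {k : ℕ} (χ : V → Option (Fin k)) : Prop :=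
  ∀ v : V, ∃ u ∈ insert v (G.neighborSet v), (χ u).isSome ∧
    ∀ w ∈ insert v (G.neighborSet v), χ w = χ u → w = u

/-- `G` admits a conflict-free coloring with `k` colors. -/
def HasCFColoring {V : Type*} (G : SimpleGraph V) (k : ℕ) : Prop :=
  ∃ χ : V → Option (Fin k), IsCFColoring G χ

/-- The intersection graph of the closed intervals `[a v, b v]`. -/
def intervalGraph {V : Type*} (a b : V → ℝ) : SimpleGraph V where
  Adj u v := u ≠ v ∧ a u ≤ b v ∧ a v ≤ b u
  symm := by
    constructor
    intro u v ⟨h1, h2, h3⟩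
    exact ⟨h1.symm, h3, h2⟩
  loopless := by
    constructor
    intro v ⟨h1, _⟩
    exact h1 rfl


set_option linter.unusedSectionVars false

open Classical

namespace CF12

variable {V : Type*} [Fintype V] [Nonempty V]

lemma exists_best (a b : V → ℝ) (t : ℝ) (h : ∃ w, a w ≤ t ∧ t ≤ b w) :
    ∃ u, (a u ≤ t ∧ t ≤ b u) ∧ ∀ w, a w ≤ t → t ≤ b w → b w ≤ b u := by
  have hne : (Finset.univ.filter fun w => a w ≤ t ∧ t ≤ b w).Nonempty := by
    obtain ⟨w, hw⟩ := h
    exact ⟨w, by simp [hw.1, hw.2]⟩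
  obtain ⟨u, hmem, hmax⟩ := Finset.exists_max_image _ b hne
  simp only [Finset.mem_filter, Finset.mem_univ, true_and] at hmem
  exact ⟨u, hmem, fun w hw1 hw2 => hmax w (by simp [hw1, hw2])⟩

/-- the interval with maximal right endpoint among those containing `t` (junk if none). -/
noncomputable def best (a b : V → ℝ) (t : ℝ) : V :=
  if h : ∃ w, a w ≤ t ∧ t ≤ b w then Classical.choose (exists_best a b t h)
  else Classical.arbitrary V

lemma best_spec (a b : V → ℝ) (t : ℝ) (h : ∃ w, a w ≤ t ∧ t ≤ b w) :
    (a (best a b t) ≤ t ∧ t ≤ b (best a b t)) ∧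
      ∀ w, a w ≤ t → t ≤ b w → b w ≤ b (best a b t) := by
  rw [best, dif_pos h]
  exact Classical.choose_spec (exists_best a b t h)

noncomputable def firstT (a : V → ℝ) : ℝ := sInf (Set.range a)

lemma firstT_mem (a : V → ℝ) : ∃ v, a v = firstT a :=
  (Set.Nonempty.csInf_mem (Set.range_nonempty a) (Set.finite_range a))

lemma firstT_le (a : V → ℝ) (v : V) : firstT a ≤ a v :=
  csInf_le (Set.finite_range a).bddBelow ⟨v, rfl⟩

noncomputable def nextT (a : V → ℝ) (r : ℝ) : ℝ := sInf (a '' {v | r < a v})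

lemma nextT_mem (a : V → ℝ) {r : ℝ} (h : ∃ v, r < a v) :
    ∃ v, r < a v ∧ a v = nextT a r := by
  have hne : (a '' {v | r < a v}).Nonempty := by
    obtain ⟨v, hv⟩ := h; exact ⟨a v, ⟨v, hv, rfl⟩⟩
  obtain ⟨v, hv, hav⟩ := Set.Nonempty.csInf_mem hne (Set.toFinite _)
  exact ⟨v, hv, hav⟩

lemma nextT_le (a : V → ℝ) {r : ℝ} {v : V} (hv : r < a v) : nextT a r ≤ a v :=
  csInf_le (Set.toFinite _).bddBelow ⟨v, hv, rfl⟩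

noncomputable def step (a b : V → ℝ) : Option (V × ℝ) → Option (V × ℝ)
  | none => none
  | some (u, _) =>
      if ∃ v, b u < a v then some (best a b (nextT a (b u)), nextT a (b u)) else none

noncomputable def chain (a b : V → ℝ) : ℕ → Option (V × ℝ)
  | 0 => some (best a b (firstT a), firstT a)
  | n+1 => step a b (chain a b n)

variable {a b : V → ℝ}

lemma chain_zero : chain a b 0 = some (best a b (firstT a), firstT a) := rfl

lemma chain_succ_some {n : ℕ} {u' : V} {t' : ℝ}
    (h : chain a b (n+1) = some (u', t')) :
    ∃ u t, chain a b n = some (u, t) ∧ (∃ v, b u < a v) ∧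
      t' = nextT a (b u) ∧ u' = best a b t' := by
  cases hc : chain a b n with
  | none => rw [chain, hc] at h; simp [step] at h
  | some p =>
    obtain ⟨u, t⟩ := p
    by_cases hex : ∃ v, b u < a v
    · rw [chain, hc] at h
      simp only [step, if_pos hex, Option.some.injEq, Prod.mk.injEq] at h
      exact ⟨u, t, rfl, hex, h.2.symm, by rw [h.2] at h ⊢; exact h.1.symm⟩
    · rw [chain, hc] at h; simp [step, hex] at h

lemma chain_none_succ {n : ℕ} (h : chain a b n = none) : chain a b (n+1) = none := by
  rw [chain, h]; rfl

lemma chain_some_of_le {m n : ℕ} (hmn : m ≤ n) {p : V × ℝ} (h : chain a b n = some p) :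
    ∃ q, chain a b m = some q := by
  by_contra hc
  push_neg at hc
  have hm : chain a b m = none := by
    cases hq : chain a b m with
    | none => rfl
    | some q => exact absurd hq (hc q)
  have : ∀ k, chain a b (m + k) = none := by
    intro k; induction k with
    | zero => exact hm
    | succ k ih => exact chain_none_succ ih
  obtain ⟨k, rfl⟩ := Nat.exists_eq_add_of_le hmn
  rw [this k] at h; cases h

lemma chain_cand (hab : ∀ v : V, a v ≤ b v) {n : ℕ} {u : V} {t : ℝ} (h : chain a b n = some (u, t)) :
    (∃ w, a w ≤ t ∧ t ≤ b w) ∧ u = best a b t := by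
  cases n with
  | zero =>
    rw [chain_zero] at h
    simp only [Option.some.injEq, Prod.mk.injEq] at h
    obtain ⟨hu, ht⟩ := h
    subst ht; subst hu
    obtain ⟨v, hv⟩ := firstT_mem a
    exact ⟨⟨v, le_of_eq hv, hv ▸ hab v⟩, rfl⟩
  | succ n =>
    obtain ⟨u₀, t₀, _, hex, ht', hu'⟩ := chain_succ_some h
    obtain ⟨v, hv, hav⟩ := nextT_mem a hex
    exact ⟨⟨v, by rw [ht']; exact le_of_eq hav, by rw [ht', ← hav]; exact hab v⟩, hu'⟩

lemma chain_spec (hab : ∀ v : V, a v ≤ b v) {n : ℕ} {u : V} {t : ℝ} (h : chain a b n = some (u, t)) :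
    a u ≤ t ∧ t ≤ b u ∧ ∀ w, a w ≤ t → t ≤ b w → b w ≤ b u := by
  obtain ⟨hc, hu⟩ := chain_cand hab h
  subst hu
  obtain ⟨⟨h1, h2⟩, h3⟩ := best_spec a b _ hc
  exact ⟨h1, h2, h3⟩

lemma chain_zero_t {u : V} {t : ℝ} (h : chain a b 0 = some (u, t)) :
    ∀ w, t ≤ a w := by
  rw [chain_zero] at h
  simp only [Option.some.injEq, Prod.mk.injEq] at h
  obtain ⟨-, ht⟩ := h
  subst ht
  exact firstT_le a

lemma chain_t_facts {n : ℕ} {u' : V} {t' : ℝ} (h : chain a b (n+1) = some (u', t'))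
    {u : V} {t : ℝ} (hc : chain a b n = some (u, t)) :
    b u < t' ∧ ∀ w, b u < a w → t' ≤ a w := by
  obtain ⟨u0, t0, hc0, hex, ht', hu'⟩ := chain_succ_some h
  rw [hc] at hc0
  simp only [Option.some.injEq, Prod.mk.injEq] at hc0
  obtain ⟨hu0, ht0⟩ := hc0
  subst hu0
  constructor
  · obtain ⟨w, hw, haw⟩ := nextT_mem a hex
    rw [ht', ← haw]; exact hw
  · intro w hw; rw [ht']; exact nextT_le a hw

lemma chain_b_lt (hab : ∀ v : V, a v ≤ b v) {n : ℕ} {u u' : V} {t t' : ℝ}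
    (h : chain a b n = some (u, t)) (h' : chain a b (n+1) = some (u', t')) :
    b u < b u' :=
  lt_of_lt_of_le (chain_t_facts h' h).1 (chain_spec hab h').2.1

lemma chain_b_mono (hab : ∀ v : V, a v ≤ b v) : ∀ {m n : ℕ}, m < n →
    ∀ {u u' : V} {t t' : ℝ}, chain a b m = some (u, t) → chain a b n = some (u', t') →
    b u < b u' := by
  intro m n
  induction n with
  | zero => omega
  | succ k ih =>
    intro hmn u u' t t' hm hn
    rcases Nat.lt_succ_iff_lt_or_eq.mp hmn with hlt | heq
    · obtain ⟨uk, tk, hk, _⟩ := chain_succ_some hn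
      exact lt_trans (ih hlt hm hk) (chain_b_lt hab hk hn)
    · subst heq; exact chain_b_lt hab hm hn

lemma chain_ne (hab : ∀ v : V, a v ≤ b v) {m n : ℕ} (hmn : m ≠ n) {u u' : V} {t t' : ℝ}
    (hm : chain a b m = some (u, t)) (hn : chain a b n = some (u', t')) : u ≠ u' := by
  intro he; subst he
  rcases Nat.lt_or_ge m n with h | h
  · exact absurd rfl (chain_b_mono hab h hm hn).ne'
  · exact absurd rfl (chain_b_mono hab (by omega) hn hm).ne'

lemma chain_none (hab : ∀ v : V, a v ≤ b v) : ∃ n, chain a b n = none := by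
  by_contra h
  push_neg at h
  have hsome : ∀ n, ∃ p, chain a b n = some p := by
    intro n
    cases hc : chain a b n with
    | none => exact absurd hc (h n)
    | some p => exact ⟨p, rfl⟩
  obtain ⟨m, n, hmn, he⟩ := Finite.exists_ne_map_eq_of_infinite
    (fun n : ℕ => (hsome n).choose.1)
  exact chain_ne hab hmn
    (by rw [(hsome m).choose_spec])
    (by rw [(hsome n).choose_spec]) (by simpa using he)

lemma exists_dom (hab : ∀ v : V, a v ≤ b v) (v : V) :
    ∃ n u t, chain a b n = some (u, t) ∧ a v ≤ b u := by
  have hex : ∃ n, chain a b n = none := chain_none hab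
  cases hN : Nat.find hex with
  | zero =>
    have := Nat.find_spec hex
    rw [hN, chain_zero] at this
    cases this
  | succ M =>
    have hnone : chain a b (M+1) = none := hN ▸ Nat.find_spec hex
    have hMlt : M < Nat.find hex := by omega
    have hMsome := Nat.find_min hex hMlt
    cases hM : chain a b M with
    | none => exact absurd hM hMsome
    | some p =>
      obtain ⟨u, t⟩ := p
      refine ⟨M, u, t, hM, ?_⟩
      by_contra hlt
      push_neg at hlt
      rw [chain, hM] at hnone
      simp only [step] at hnone
      rw [if_pos ⟨v, hlt⟩] at hnone
      cases hnone

/-- Key lemma: if `v` is dominated at index `i` (i.e. `a v ≤ b ui`) and `v`'s interval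
meets the chain interval at index `m ≥ i+2`, then `m = i+2` and `v` also meets the
chain interval at index `i+1`. -/
lemma far_adj (hab : ∀ v : V, a v ≤ b v) {v : V} {i : ℕ} {ui : V} {ti : ℝ}
    (hi : chain a b i = some (ui, ti)) (hvle : a v ≤ b ui)
    {m : ℕ} {um : V} {tm : ℝ} (hm : chain a b m = some (um, tm)) (hmi : i + 2 ≤ m)
    (h1 : a um ≤ b v) (h2 : a v ≤ b um) :
    m = i + 2 ∧ ∃ u1 t1, chain a b (i+1) = some (u1, t1) ∧ a u1 ≤ b v ∧ a v ≤ b u1 := by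
  obtain ⟨⟨u1, t1⟩, hc1⟩ := chain_some_of_le (by omega : i + 1 ≤ m) hm
  obtain ⟨hlt1, hmin1⟩ := chain_t_facts hc1 hi
  obtain ⟨ha1, hb1, hmax1⟩ := chain_spec hab hc1
  rcases le_or_gt (a um) (b ui) with hc | hc
  · -- impossible: um would be a candidate at t1
    have hbm : b u1 < b um := chain_b_mono hab (by omega) hc1 hm
    have := hmax1 um (le_of_lt (lt_of_le_of_lt hc hlt1)) (le_trans hb1 hbm.le)
    exact absurd this (not_le.mpr hbm)
  · have ht1um : t1 ≤ a um := hmin1 um hc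
    have hvt1 : a v < t1 := lt_of_le_of_lt hvle hlt1
    have hbv : b v ≤ b u1 := hmax1 v hvt1.le (le_trans ht1um h1)
    have hmeet : a u1 ≤ b v ∧ a v ≤ b u1 :=
      ⟨le_trans ha1 (le_trans ht1um h1), le_trans hvt1.le hb1⟩
    refine ⟨?_, u1, t1, hc1, hmeet.1, hmeet.2⟩
    by_contra hne
    have h3m : i + 3 ≤ m := by omega
    obtain ⟨⟨u2, t2⟩, hc2⟩ := chain_some_of_le (by omega : i + 2 ≤ m) hm
    obtain ⟨hlt2, _⟩ := chain_t_facts hc2 hc1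
    obtain ⟨_, hb2, hmax2⟩ := chain_spec hab hc2
    have hbm : b u2 < b um := chain_b_mono hab (by omega) hc2 hm
    have := hmax2 um (le_of_lt (lt_of_le_of_lt (le_trans h1 hbv) hlt2))
      (le_trans hb2 hbm.le)
    exact absurd this (not_le.mpr hbm)

noncomputable def chainColor (a b : V → ℝ) (v : V) : Option (Fin 2) :=
  if h : ∃ n, ∃ t, chain a b n = some (v, t) then
    some ⟨Nat.find h % 2, Nat.mod_lt _ (by norm_num)⟩
  else none

lemma chainColor_eq (hab : ∀ v : V, a v ≤ b v) {m : ℕ} {u : V} {t : ℝ}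
    (hm : chain a b m = some (u, t)) :
    chainColor a b u = some ⟨m % 2, Nat.mod_lt _ (by norm_num)⟩ := by
  have h : ∃ n t, chain a b n = some (u, t) := ⟨m, t, hm⟩
  rw [chainColor, dif_pos h]
  obtain ⟨t', ht'⟩ := Nat.find_spec h
  have hfm : Nat.find h = m := by
    by_contra hne
    exact chain_ne hab hne ht' hm rfl
  simp [hfm]

lemma chainColor_some (hab : ∀ v : V, a v ≤ b v) {w : V} {c : Fin 2}
    (h : chainColor a b w = some c) :
    ∃ m t, chain a b m = some (w, t) ∧ (c : ℕ) = m % 2 := by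
  rw [chainColor] at h
  split at h
  · next hex =>
    obtain ⟨t', ht'⟩ := Nat.find_spec hex
    simp only [Option.some.injEq] at h
    exact ⟨Nat.find hex, t', ht', by rw [← h]⟩
  · cases h

end CF12

theorem stmt12 {V : Type*} [Fintype V] (a b : V → ℝ) (hab : ∀ v : V, a v ≤ b v) :
    HasCFColoring (intervalGraph a b) 2 := by
  cases isEmpty_or_nonempty V with
  | inl h => exact ⟨fun _ => none, fun v => (IsEmpty.false v).elim⟩
  | inr h =>
    classical
    refine ⟨CF12.chainColor a b, ?_⟩
    intro v
    obtain ⟨i, ui, ti, hi, hvi, hmin⟩ :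
        ∃ i ui ti, CF12.chain a b i = some (ui, ti) ∧ a v ≤ b ui ∧
          ∀ j, j < i → ∀ uj tj, CF12.chain a b j = some (uj, tj) → b uj < a v := by
      have hQ := CF12.exists_dom hab v
      obtain ⟨ui, ti, hi, hvi⟩ := Nat.find_spec hQ
      refine ⟨Nat.find hQ, ui, ti, hi, hvi, fun j hj uj tj hjc => ?_⟩
      by_contra hle
      exact Nat.find_min hQ hj ⟨uj, tj, hjc, not_lt.mp hle⟩
    have haui : a ui ≤ b v := by
      cases i with
      | zero =>
        exact le_trans (CF12.chain_spec hab hi).1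
          (le_trans (CF12.chain_zero_t hi v) (hab v))
      | succ j =>
        obtain ⟨⟨uj, tj⟩, hj⟩ := CF12.chain_some_of_le (Nat.le_succ j) hi
        have hbj : b uj < a v := hmin j (Nat.lt_succ_self j) uj tj hj
        have hti : ti ≤ a v := (CF12.chain_t_facts hi hj).2 v hbj
        exact le_trans (CF12.chain_spec hab hi).1 (le_trans hti (hab v))
    have hmem : ∀ x : V, a x ≤ b v → a v ≤ b x →
        x ∈ insert v ((intervalGraph a b).neighborSet v) := by
      intro x h1 h2
      by_cases hx : x = v
      · subst hx; exact Set.mem_insert _ _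
      · exact Set.mem_insert_of_mem _ ⟨fun he => hx he.symm, h2, h1⟩
    have hmem' : ∀ w ∈ insert v ((intervalGraph a b).neighborSet v),
        a w ≤ b v ∧ a v ≤ b w := by
      intro w hw
      rcases Set.mem_insert_iff.mp hw with rfl | hadj
      · exact ⟨hab w, hab w⟩
      · exact ⟨hadj.2.2, hadj.2.1⟩
    by_cases hnext : ∃ u1 t1, CF12.chain a b (i+1) = some (u1, t1) ∧
        a u1 ≤ b v ∧ a v ≤ b u1
    · obtain ⟨u1, t1, h1, hu1a, hu1b⟩ := hnext
      refine ⟨u1, hmem u1 hu1a hu1b, ?_, ?_⟩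
      · rw [CF12.chainColor_eq hab h1]; rfl
      · intro w hw hχ
        rw [CF12.chainColor_eq hab h1] at hχ
        obtain ⟨m, tm, hm, hcm⟩ := CF12.chainColor_some hab hχ
        have hpar : (i + 1) % 2 = m % 2 := hcm
        obtain ⟨hw1, hw2⟩ := hmem' w hw
        have him : i ≤ m := by
          by_contra hlt
          push_neg at hlt
          exact absurd hw2 (not_le.mpr (hmin m hlt w tm hm))
        have hme : m = i + 1 := by
          rcases Nat.lt_or_ge m (i+2) with hlt | hge
          · omega
          · have := (CF12.far_adj hab hi hvi hm hge hw1 hw2).1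
            omega
        subst hme
        rw [h1] at hm
        simp only [Option.some.injEq, Prod.mk.injEq] at hm
        exact hm.1.symm
    · refine ⟨ui, hmem ui haui hvi, ?_, ?_⟩
      · rw [CF12.chainColor_eq hab hi]; rfl
      · intro w hw hχ
        rw [CF12.chainColor_eq hab hi] at hχ
        obtain ⟨m, tm, hm, hcm⟩ := CF12.chainColor_some hab hχ
        have hpar : i % 2 = m % 2 := hcm
        obtain ⟨hw1, hw2⟩ := hmem' w hw
        have him : i ≤ m := by
          by_contra hlt
          push_neg at hlt
          exact absurd hw2 (not_le.mpr (hmin m hlt w tm hm))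
        have hme : m = i := by
          rcases Nat.lt_or_ge m (i+2) with hlt | hge
          · omega
          · obtain ⟨-, u1, t1, hc1, ha1, hb1⟩ := CF12.far_adj hab hi hvi hm hge hw1 hw2
            exact absurd ⟨u1, t1, hc1, ha1, hb1⟩ hnext
        subst hme
        rw [hi] at hm
        simp only [Option.some.injEq, Prod.mk.injEq] at hm
        exact hm.1.symm
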